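/- With C, Xᵢ, Cᵢ as above (objects of C generated by X₁ ∪ ⋯ ∪ Xₙ, with xᵢ ⊗ xⱼ ≅ xⱼ ⊗ xᵢ for xᵢ ∈ Xᵢ, xⱼ ∈ Xⱼ, i ≠ j), the canonical functor F : C₁ ⊗ ⋯ ⊗ Cₙ → C is essentially surjective on objects: every object of C is isomorphic to a tensor product c₁ ⊗ ⋯ ⊗ cₙ with cᵢ an object of Cᵢ. -/

import Mathlib

open CategoryTheory MonoidalCategory

/-- The tensor product of a list of objects in a monoidal category. -/
def listTensor {C : Type*} [Category C] [MonoidalCategory C] (l : List C) : C :=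
  l.foldr (· ⊗ ·) (𝟙_ C)

section ListAux

/-- Drop index-`0` entries and shift remaining indices down by one. -/
def stmt11G {n : ℕ} {α : Type*} (q : Fin (n+1) × α) : Option (Fin n × α) :=
  Fin.cases none (fun i => some (i, q.2)) q.1

lemma stmt11_aux1 {α : Type*} {n : ℕ} : ∀ p : List (Fin (n+1) × α),
    (p.filterMap stmt11G).map Prod.snd =
      (p.filter fun q => !decide (q.1 = 0)).map Prod.snd := by
  intro p
  induction p with
  | nil => rfl
  | cons q p ih =>
    obtain ⟨j, x⟩ := q
    induction j using Fin.cases with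
    | zero => simpa [stmt11G, List.filterMap_cons] using ih
    | succ j => simpa [stmt11G, Fin.succ_ne_zero] using ih

lemma stmt11_aux2 {α : Type*} {n : ℕ} (i : Fin n) : ∀ p : List (Fin (n+1) × α),
    ((p.filterMap stmt11G).filter fun q => decide (q.1 = i)).map Prod.snd =
      (p.filter fun q => decide (q.1 = i.succ)).map Prod.snd := by
  intro p
  induction p with
  | nil => rfl
  | cons q p ih =>
    obtain ⟨j, x⟩ := q
    induction j using Fin.cases with
    | zero => simpa [stmt11G, List.filterMap_cons, (Fin.succ_ne_zero i).symm] using ih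
    | succ j =>
      by_cases hj : j = i
      · subst hj; simpa [stmt11G] using ih
      · simpa [stmt11G, hj, fun h => hj (Fin.succ_inj.1 h)] using ih

lemma stmt11_aux3 {α : Type*} {n : ℕ} {p : List (Fin (n+1) × α)} {q : Fin n × α}
    (hq : q ∈ p.filterMap stmt11G) : (q.1.succ, q.2) ∈ p := by
  obtain ⟨r, hr, hfr⟩ := List.mem_filterMap.1 hq
  obtain ⟨j, x⟩ := r
  induction j using Fin.cases with
  | zero => simp [stmt11G] at hfr
  | succ j =>
    simp only [stmt11G, Fin.cases_succ, Option.some.injEq] at hfr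
    subst hfr
    exact hr

end ListAux

section Aux
variable {C : Type*} [Category C] [MonoidalCategory C]

/-- Commute an object past a list of objects, given swaps with each member. -/
lemma stmt11_commute (x : C) : ∀ (l : List C), (∀ y ∈ l, Nonempty ((x ⊗ y : C) ≅ (y ⊗ x : C))) →
    Nonempty ((x ⊗ listTensor l : C) ≅ (listTensor l ⊗ x : C))
  | [], _ => ⟨(ρ_ x) ≪≫ (λ_ x).symm⟩
  | y :: l, h => by
    obtain ⟨e⟩ := stmt11_commute x l (fun z hz => h z (List.mem_cons_of_mem _ hz))
    obtain ⟨f⟩ := h y (List.mem_cons_self)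
    exact ⟨(α_ x y (listTensor l)).symm ≪≫ whiskerRightIso f _ ≪≫ α_ y x _ ≪≫
      whiskerLeftIso y e ≪≫ (α_ y _ x).symm⟩

lemma stmt11_split {n : ℕ} (X : Fin (n+1) → Set C)
    (hswap : ∀ i j : Fin (n+1), i ≠ j → ∀ x ∈ X i, ∀ y ∈ X j,
      Nonempty ((x ⊗ y : C) ≅ (y ⊗ x : C))) :
    ∀ (p : List (Fin (n+1) × C)), (∀ q ∈ p, q.2 ∈ X q.1) →
    Nonempty ((listTensor (p.map Prod.snd) : C) ≅
      (listTensor ((p.filter fun q => decide (q.1 = 0)).map Prod.snd) ⊗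
       listTensor ((p.filter fun q => !decide (q.1 = 0)).map Prod.snd) : C))
  | [], _ => ⟨(λ_ _).symm⟩
  | q :: p, hp => by
    obtain ⟨e⟩ := stmt11_split X hswap p (fun r hr => hp r (List.mem_cons_of_mem _ hr))
    by_cases h : q.1 = 0
    · simp only [List.filter_cons, h, decide_true, Bool.not_true, if_true, if_false,
        Bool.false_eq_true, List.map_cons]
      exact ⟨whiskerLeftIso q.2 e ≪≫ (α_ _ _ _).symm⟩
    · have hA : ∀ y ∈ (p.filter fun r => decide (r.1 = 0)).map Prod.snd,
          Nonempty ((q.2 ⊗ y : C) ≅ (y ⊗ q.2 : C)) := by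
        intro y hy
        obtain ⟨r, hr, rfl⟩ := List.mem_map.1 hy
        have hr' := List.mem_filter.1 hr
        have h0 : r.1 = 0 := by simpa using hr'.2
        exact hswap q.1 r.1 (by rw [h0]; exact h) q.2 (hp q (List.mem_cons_self))
          r.2 (hp r (List.mem_cons_of_mem _ hr'.1))
      obtain ⟨sw⟩ := stmt11_commute q.2 _ hA
      have hd : decide (q.1 = 0) = false := by simp [h]
      simp only [List.filter_cons, hd, Bool.not_false, if_true, if_false,
        Bool.false_eq_true, List.map_cons]
      exact ⟨whiskerLeftIso q.2 e ≪≫ (α_ _ _ _).symm ≪≫ whiskerRightIso sw _ ≪≫ α_ _ _ _⟩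

lemma stmt11_main : ∀ {n : ℕ} (X : Fin n → Set C)
    (_ : ∀ i j : Fin n, i ≠ j → ∀ x ∈ X i, ∀ y ∈ X j,
      Nonempty ((x ⊗ y : C) ≅ (y ⊗ x : C)))
    (p : List (Fin n × C)), (∀ q ∈ p, q.2 ∈ X q.1) →
    Nonempty ((listTensor (p.map Prod.snd) : C) ≅
      listTensor (List.ofFn fun i =>
        listTensor ((p.filter fun q => decide (q.1 = i)).map Prod.snd)))
  | 0, X, hswap, [], hp => ⟨Iso.refl _⟩
  | 0, X, hswap, q :: p, hp => q.1.elim0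
  | n + 1, X, hswap, p, hp => by
    obtain ⟨e1⟩ := stmt11_split X hswap p hp
    have hp'' : ∀ q ∈ p.filterMap stmt11G, q.2 ∈ (fun i : Fin n => X i.succ) q.1 :=
      fun q hq => hp _ (stmt11_aux3 hq)
    obtain ⟨e2⟩ := stmt11_main (fun i : Fin n => X i.succ)
      (fun i j hij x hx y hy => hswap i.succ j.succ (fun h => hij (Fin.succ_inj.1 h)) x hx y hy)
      (p.filterMap stmt11G) hp''
    rw [stmt11_aux1] at e2
    simp only [stmt11_aux2] at e2
    rw [List.ofFn_succ]
    exact ⟨e1 ≪≫ whiskerLeftIso _ e2⟩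

end Aux

/-- With `C` a strict `k`-linear monoidal category whose objects
are generated by `X₁ ∪ ⋯ ∪ Xₙ`, and `xᵢ ⊗ xⱼ ≅ xⱼ ⊗ xᵢ` for `xᵢ ∈ Xᵢ`,
`xⱼ ∈ Xⱼ`, `i ≠ j`, every object of `C` is isomorphic to a tensor product
`c₁ ⊗ ⋯ ⊗ cₙ` with each `cᵢ` an object of the subcategory `Cᵢ` generated by
`Xᵢ`; i.e., the canonical functor is essentially surjective on objects. -/
theorem stmt_11 (k : Type*) [CommRing k]
    (C : Type*) [Category C] [MonoidalCategory C] [Preadditive C] [Linear k C]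
    (n : ℕ) (X : Fin n → Set C)
    (hgen : ∀ c : C, ∃ l : List C, (∀ x ∈ l, ∃ i, x ∈ X i) ∧ c = listTensor l)
    (hswap : ∀ i j : Fin n, i ≠ j → ∀ x ∈ X i, ∀ y ∈ X j,
      Nonempty ((x ⊗ y : C) ≅ (y ⊗ x : C))) :
    ∀ c : C, ∃ cs : Fin n → C,
      (∀ i, ∃ l : List C, (∀ x ∈ l, x ∈ X i) ∧ cs i = listTensor l) ∧
      Nonempty (c ≅ listTensor (List.ofFn cs)) := by
  intro c
  obtain ⟨l, hl, rfl⟩ := hgen c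
  set p : List (Fin n × C) := l.pmap (fun x hx => (hx.choose, x)) hl with hpdef
  have hmap : p.map Prod.snd = l := by
    rw [hpdef, List.map_pmap]
    exact (List.pmap_eq_map _).trans (List.map_id l)
  have hp : ∀ q ∈ p, q.2 ∈ X q.1 := by
    intro q hq
    rw [hpdef] at hq
    obtain ⟨x, hx, rfl⟩ := List.mem_pmap.1 hq
    exact (hl x hx).choose_spec
  refine ⟨fun i => listTensor ((p.filter fun q => decide (q.1 = i)).map Prod.snd), ?_, ?_⟩
  · intro i
    refine ⟨_, ?_, rfl⟩
    intro x hx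
    obtain ⟨q, hq, rfl⟩ := List.mem_map.1 hx
    have hq' := List.mem_filter.1 hq
    have : q.1 = i := by simpa using hq'.2
    exact this ▸ hp q hq'.1
  · obtain ⟨e⟩ := stmt11_main X hswap p hp
    rw [hmap] at e
    exact ⟨e⟩
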